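/- Suppose f : B × ℝ → ℝ is continuous and for each x ∈ B the map t ↦ f(x,t)/|t|^{q-1} is increasing on ℝ∖{0}, with F(x,t) = ∫₀ᵗ f(x,s) ds. Then for each x ∈ B, the function t ↦ t·f(x,t) − q·F(x,t) is increasing for t > 0 and decreasing for t < 0. -/

import Mathlib

open Real

lemma aux_pos (q : ℝ) (hq : 1 < q) (f : ℝ → ℝ) (hf : Continuous f)
    (hmono : ∀ t s : ℝ, 0 < t → t < s → f t / t ^ (q - 1) < f s / s ^ (q - 1)) :
    StrictMonoOn (fun t => t * f t - q * ∫ s in (0:ℝ)..t, f s) (Set.Ioi (0:ℝ)) := by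
  intro a ha b hb hab
  simp only [Set.mem_Ioi] at ha hb
  have hq0 : (0:ℝ) < q := by linarith
  set K := f b / b ^ (q - 1) with hK
  have hbpow : (0:ℝ) < b ^ (q - 1) := Real.rpow_pos_of_pos hb _
  have hapow : (0:ℝ) < a ^ (q - 1) := Real.rpow_pos_of_pos ha _
  have hfb : f b = K * b ^ (q - 1) := by rw [hK]; field_simp
  have hpt : ∀ s ∈ Set.Icc a b, f s ≤ K * s ^ (q - 1) := by
    intro s hs
    rcases eq_or_lt_of_le hs.2 with h | h
    · rw [h, hfb]
    · have hs0 : 0 < s := lt_of_lt_of_le ha hs.1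
      have hspow : (0:ℝ) < s ^ (q - 1) := Real.rpow_pos_of_pos hs0 _
      have h2 := hmono s b hs0 h
      have h3 : f s = (f s / s ^ (q - 1)) * s ^ (q - 1) := by field_simp
      nlinarith
  have hint1 : IntervalIntegrable f MeasureTheory.volume a b := hf.intervalIntegrable a b
  have hint2 : IntervalIntegrable (fun s => K * s ^ (q - 1)) MeasureTheory.volume a b := by
    apply ContinuousOn.intervalIntegrable
    apply ContinuousOn.mul continuousOn_const
    intro s hs
    have hs0 : s ≠ 0 := by
      rw [Set.uIcc_of_le hab.le] at hs
      exact (lt_of_lt_of_le ha hs.1).ne'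
    exact (Real.continuousAt_rpow_const s _ (Or.inl hs0)).continuousWithinAt
  have hIle : (∫ s in a..b, f s) ≤ ∫ s in a..b, K * s ^ (q - 1) :=
    intervalIntegral.integral_mono_on hab.le hint1 hint2 hpt
  have hIval : (∫ s in a..b, K * s ^ (q - 1)) = K * ((b ^ q - a ^ q) / q) := by
    rw [intervalIntegral.integral_const_mul, integral_rpow (Or.inl (by linarith))]
    norm_num
  have hdiff : (∫ s in (0:ℝ)..b, f s) - ∫ s in (0:ℝ)..a, f s = ∫ s in a..b, f s :=
    intervalIntegral.integral_interval_sub_left (hf.intervalIntegrable 0 b)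
      (hf.intervalIntegrable 0 a)
  have hbq : b ^ q = b ^ (q - 1) * b := by
    rw [← Real.rpow_add_one hb.ne' (q - 1)]; norm_num
  have haq : a ^ q = a ^ (q - 1) * a := by
    rw [← Real.rpow_add_one ha.ne' (q - 1)]; norm_num
  have hbf : b * f b = K * b ^ q := by rw [hfb, hbq]; ring
  have haf : a * f a < K * a ^ q := by
    have h2 := hmono a b ha hab
    have h3 : a * f a = (f a / a ^ (q - 1)) * a ^ q := by
      rw [haq]; field_simp
    have haq0 : (0:ℝ) < a ^ q := Real.rpow_pos_of_pos ha _
    rw [h3]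
    exact mul_lt_mul_of_pos_right h2 haq0
  have hqI : q * (∫ s in a..b, f s) ≤ K * b ^ q - K * a ^ q := by
    have := mul_le_mul_of_nonneg_left hIle hq0.le
    rw [hIval] at this
    have hq' : q ≠ 0 := hq0.ne'
    calc q * (∫ s in a..b, f s) ≤ q * (K * ((b ^ q - a ^ q) / q)) := this
      _ = K * b ^ q - K * a ^ q := by field_simp
  have h5 : q * (∫ s in (0:ℝ)..b, f s) - q * (∫ s in (0:ℝ)..a, f s)
      = q * ∫ s in a..b, f s := by rw [← hdiff]; ring
  simp only
  linarith

theorem tf_sub_qF_monotone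
    (q : ℝ) (hq : 4 < q)
    (f : EuclideanSpace ℝ (Fin 4) → ℝ → ℝ)
    (hf : Continuous (Function.uncurry f))
    (F : EuclideanSpace ℝ (Fin 4) → ℝ → ℝ)
    (hF : ∀ x t, F x t = ∫ s in (0:ℝ)..t, f x s)
    (hmono : ∀ x ∈ Metric.ball (0 : EuclideanSpace ℝ (Fin 4)) 1,
      ∀ t s : ℝ, t ≠ 0 → s ≠ 0 → t < s →
        f x t / |t| ^ (q - 1) < f x s / |s| ^ (q - 1)) :
    ∀ x ∈ Metric.ball (0 : EuclideanSpace ℝ (Fin 4)) 1,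
      StrictMonoOn (fun t => t * f x t - q * F x t) (Set.Ioi (0:ℝ)) ∧
      StrictAntiOn (fun t => t * f x t - q * F x t) (Set.Iio (0:ℝ)) := by
  intro x hx
  have hq1 : (1:ℝ) < q := by linarith
  have hfx : Continuous (f x) := by
    have : Continuous (fun t : ℝ => Function.uncurry f (x, t)) :=
      hf.comp (continuous_const.prodMk continuous_id)
    simpa [Function.uncurry] using this
  constructor
  · have h1 : StrictMonoOn (fun t => t * f x t - q * ∫ s in (0:ℝ)..t, f x s)
        (Set.Ioi (0:ℝ)) := by
      apply aux_pos q hq1 (f x) hfx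
      intro t s ht hts
      have := hmono x hx t s ht.ne' (ht.trans hts).ne' hts
      rwa [abs_of_pos ht, abs_of_pos (ht.trans hts)] at this
    intro a ha b hb hab
    have := h1 ha hb hab
    simpa [hF] using this
  · -- reduce to positive case via t ↦ -f x (-t)
    set g : ℝ → ℝ := fun t => -f x (-t) with hg
    have hgc : Continuous g := (hfx.comp continuous_neg).neg
    have h1 : StrictMonoOn (fun t => t * g t - q * ∫ s in (0:ℝ)..t, g s)
        (Set.Ioi (0:ℝ)) := by
      apply aux_pos q hq1 g hgc
      intro t s ht hts
      have hs : 0 < s := ht.trans hts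
      have := hmono x hx (-s) (-t) (by linarith) (by linarith) (by linarith)
      rw [abs_neg, abs_neg, abs_of_pos ht, abs_of_pos hs] at this
      have hspow : (0:ℝ) < s ^ (q - 1) := Real.rpow_pos_of_pos hs _
      have htpow : (0:ℝ) < t ^ (q - 1) := Real.rpow_pos_of_pos ht _
      simp only [hg]
      rw [div_lt_div_iff₀ hspow htpow] at this
      rw [div_lt_div_iff₀ htpow hspow]
      linarith
    have hint : ∀ t : ℝ, (∫ s in (0:ℝ)..t, g s) = ∫ s in (0:ℝ)..(-t), f x s := by
      intro t
      have h2 : (∫ s in (0:ℝ)..t, f x (-s)) = ∫ s in (-t)..(0:ℝ), f x s := by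
        simpa using intervalIntegral.integral_comp_neg (a := 0) (b := t) (fun s => f x s)
      simp only [hg]
      rw [intervalIntegral.integral_neg, h2, ← intervalIntegral.integral_symm]
    intro a ha b hb hab
    simp only [Set.mem_Iio] at ha hb
    have hkey := h1 (a := -b) (b := -a) (by simp [Set.mem_Ioi]; linarith)
      (by simp [Set.mem_Ioi]; linarith) (by linarith)
    simp only [hint] at hkey
    simp only [hg, hint, neg_neg] at hkey
    simp only [hF]
    linarith
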